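/- Assume B² is dense in B. If D : A ⊕_φ B → (A ⊕_φ B)* is a continuous derivation, written componentwise as D(a,b) = (D₁(a) + D₂(b), D₃(a) + D₄(b)) with D₁ : A → A*, D₂ : B → A*, D₃ : A → B*, D₄ : B → B*, then D₃ = 0, D₁ is a derivation on A, D₄ is a derivation on B, a·D₂(b) = D₂(b)·a = φ(a)D₂(b) for all a ∈ A, b ∈ B, and D₂(bb') = ⟨b, D₄(b')⟩φ + ⟨b', D₄(b)⟩φ for all b, b' ∈ B. -/

import Mathlib

open NormedSpace

/-- The multiplication of the `φ`-Lau product `A ⊕_φ B`. -/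
noncomputable def lauMul {A B : Type*} [NonUnitalNormedRing A] [NormedSpace ℂ A]
    [NonUnitalNormedRing B] [NormedSpace ℂ B] (φ : A →L[ℂ] ℂ)
    (x y : A × B) : A × B :=
  (x.1 * y.1, φ x.1 • y.2 + φ y.1 • x.2 + x.2 * y.2)

/-- `D : A ⊕_φ B → (A ⊕_φ B)* ≅ A* × B*` is a derivation for the dual actions
`(a,b)·(f,g) = (a·f + g(b)φ, φ(a)g + b·g)` and `(f,g)·(a,b) = (f·a + g(b)φ, φ(a)g + g·b)`,
stated by pairing against an arbitrary `(c,d)`. -/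
def IsDerLau {A B : Type*} [NonUnitalNormedRing A] [NormedSpace ℂ A]
    [NonUnitalNormedRing B] [NormedSpace ℂ B] (φ : A →L[ℂ] ℂ)
    (D : (A × B) →L[ℂ] (StrongDual ℂ A × StrongDual ℂ B)) : Prop :=
  ∀ (a a' : A) (b b' : B) (c : A) (d : B),
    (D (lauMul φ (a, b) (a', b'))).1 c + (D (lauMul φ (a, b) (a', b'))).2 d
      = ((D (a', b')).1 (c * a) + (D (a', b')).2 b * φ c
          + φ a * (D (a', b')).2 d + (D (a', b')).2 (d * b))
        + ((D (a, b)).1 (a' * c) + (D (a, b)).2 b' * φ c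
          + φ a' * (D (a, b)).2 d + (D (a, b)).2 (b' * d))

/-- If `B²` is dense in `B` and a continuous derivation `D : A ⊕_φ B → (A ⊕_φ B)*` is
written componentwise as `D(a,b) = (D₁(a) + D₂(b), D₃(a) + D₄(b))`, then `D₃ = 0`, `D₁` is
a derivation on `A`, `D₄` is a derivation on `B`, `a·D₂(b) = D₂(b)·a = φ(a)D₂(b)` and
`D₂(bb') = ⟨b, D₄(b')⟩φ + ⟨b', D₄(b)⟩φ`. -/
theorem lau_derivation_decomposition {A B : Type*} [NonUnitalNormedRing A] [NormedSpace ℂ A]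
    [IsScalarTower ℂ A A] [SMulCommClass ℂ A A] [CompleteSpace A]
    [NonUnitalNormedRing B] [NormedSpace ℂ B]
    [IsScalarTower ℂ B B] [SMulCommClass ℂ B B] [CompleteSpace B]
    (φ : A →L[ℂ] ℂ) (hφmul : ∀ a a' : A, φ (a * a') = φ a * φ a') (hφne : φ ≠ 0)
    (hB2 : closure ((Submodule.span ℂ {x : B | ∃ b b' : B, x = b * b'} :
      Submodule ℂ B) : Set B) = Set.univ)
    (D : (A × B) →L[ℂ] (StrongDual ℂ A × StrongDual ℂ B)) (hD : IsDerLau φ D)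
    (D₁ : A →L[ℂ] StrongDual ℂ A) (D₂ : B →L[ℂ] StrongDual ℂ A)
    (D₃ : A →L[ℂ] StrongDual ℂ B) (D₄ : B →L[ℂ] StrongDual ℂ B)
    (hdec : ∀ (a : A) (b : B), D (a, b) = (D₁ a + D₂ b, D₃ a + D₄ b)) :
    D₃ = 0 ∧
    (∀ a a' c : A, D₁ (a * a') c = D₁ a' (c * a) + D₁ a (a' * c)) ∧
    (∀ b b' d : B, D₄ (b * b') d = D₄ b' (d * b) + D₄ b (b' * d)) ∧
    (∀ (a : A) (b : B) (c : A),
      D₂ b (c * a) = φ a * D₂ b c ∧ D₂ b (a * c) = φ a * D₂ b c) ∧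
    (∀ b b' : B, D₂ (b * b') = D₄ b' b • (φ : StrongDual ℂ A) + D₄ b b' • (φ : StrongDual ℂ A)) := by

  -- D₃ a vanishes on products
  have hD3prod : ∀ (a : A) (b' d : B), D₃ a (b' * d) = 0 := by
    intro a b' d
    have h := hD a 0 0 b' 0 d
    simp only [lauMul, hdec, mul_zero, zero_mul, map_zero, smul_zero, zero_smul, add_zero,
      zero_add, ContinuousLinearMap.add_apply, ContinuousLinearMap.zero_apply,
      ContinuousLinearMap.map_smul, ContinuousLinearMap.smul_apply, smul_eq_mul,
      ContinuousLinearMap.map_zero] at h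
    linear_combination -h
  -- D₃ = 0 everywhere
  have hD3 : ∀ (a : A) (x : B), D₃ a x = 0 := by
    intro a x
    have hx : x ∈ closure ((Submodule.span ℂ {x : B | ∃ b b' : B, x = b * b'} :
        Submodule ℂ B) : Set B) := by rw [hB2]; trivial
    have hsub : ((Submodule.span ℂ {x : B | ∃ b b' : B, x = b * b'} :
        Submodule ℂ B) : Set B) ⊆ {y : B | D₃ a y = 0} := by
      intro y hy
      refine Submodule.span_induction (p := fun y _ => D₃ a y = 0) ?_ (map_zero _) ?_ ?_ hy
      · rintro z ⟨b, b', rfl⟩; exact hD3prod a b b'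
      · intro u v _ _ hu hv; simp [map_add, hu, hv]
      · intro r u _ hu; simp [map_smul, hu]
    have hclosed : IsClosed {y : B | D₃ a y = 0} :=
      isClosed_eq (D₃ a).continuous continuous_const
    exact (closure_minimal hsub hclosed) hx
  refine ⟨?_, ?_, ?_, ?_, ?_⟩
  · ext a x; exact hD3 a x
  · -- D₁ derivation: from hD a a' 0 0 c 0
    intro a a' c
    have h := hD a a' 0 0 c 0
    simp only [lauMul, hdec, mul_zero, zero_mul, map_zero, smul_zero, zero_smul, add_zero,
      zero_add, ContinuousLinearMap.add_apply, ContinuousLinearMap.zero_apply,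
      ContinuousLinearMap.map_smul, ContinuousLinearMap.smul_apply, smul_eq_mul,
      ContinuousLinearMap.map_zero] at h
    linear_combination h
  · -- D₄ derivation: from hD 0 0 b b' 0 d
    intro b b' d
    have h := hD 0 0 b b' 0 d
    simp only [lauMul, hdec, mul_zero, zero_mul, map_zero, smul_zero, zero_smul, add_zero,
      zero_add, ContinuousLinearMap.add_apply, ContinuousLinearMap.zero_apply,
      ContinuousLinearMap.map_smul, ContinuousLinearMap.smul_apply, smul_eq_mul,
      ContinuousLinearMap.map_zero] at h
    linear_combination h
  · intro a b c
    constructor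
    · have h := hD a 0 0 b c 0
      simp only [lauMul, hdec, mul_zero, zero_mul, map_zero, smul_zero, zero_smul, add_zero,
        zero_add, ContinuousLinearMap.add_apply, ContinuousLinearMap.zero_apply,
        ContinuousLinearMap.map_smul, ContinuousLinearMap.smul_apply, smul_eq_mul,
        ContinuousLinearMap.map_zero, hD3] at h
      linear_combination -h
    · have h := hD 0 a b 0 c 0
      simp only [lauMul, hdec, mul_zero, zero_mul, map_zero, smul_zero, zero_smul, add_zero,
        zero_add, ContinuousLinearMap.add_apply, ContinuousLinearMap.zero_apply,
        ContinuousLinearMap.map_smul, ContinuousLinearMap.smul_apply, smul_eq_mul,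
        ContinuousLinearMap.map_zero, hD3] at h
      linear_combination -h
  · intro b b'
    ext c
    have h := hD 0 0 b b' c 0
    simp only [lauMul, hdec, mul_zero, zero_mul, map_zero, smul_zero, zero_smul, add_zero,
      zero_add, ContinuousLinearMap.add_apply, ContinuousLinearMap.zero_apply,
      ContinuousLinearMap.map_smul, ContinuousLinearMap.smul_apply, smul_eq_mul,
      ContinuousLinearMap.map_zero] at h
    simp only [ContinuousLinearMap.add_apply, ContinuousLinearMap.smul_apply,
      ContinuousLinearMap.coe_coe, smul_eq_mul]
    linear_combination h
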